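/- For all natural numbers i, n, k with 0 ≤ i ≤ n ≤ k, the alternating sum Σ_{s=0}^{k−n} (−1)^s · C(k−i+1, n−i+1+s) · C(n−i+s, s) equals 1, where the sum is taken in the integers and C(·,·) denotes the binomial coefficient. -/

import Mathlib

lemma aux_binom (d m : ℕ) :
    ∑ s ∈ Finset.range (d + 1),
      (-1 : ℤ) ^ s * (Nat.choose (m + d + 1) (m + 1 + s)) * (Nat.choose (m + s) s) = 1 := by
  induction d with
  | zero => simp
  | succ d ih =>
    have pascal : ∀ s, (Nat.choose (m + (d+1) + 1) (m + 1 + s) : ℤ)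
        = Nat.choose (m + d + 1) (m + s) + Nat.choose (m + d + 1) (m + 1 + s) := by
      intro s
      have : m + (d+1) + 1 = (m + d + 1) + 1 := by ring
      rw [this]
      have : m + 1 + s = (m + s) + 1 := by ring
      rw [this]
      exact_mod_cast Nat.choose_succ_succ (m + d + 1) (m + s)
    have split : ∑ s ∈ Finset.range (d + 2),
        (-1 : ℤ) ^ s * (Nat.choose (m + (d+1) + 1) (m + 1 + s)) * (Nat.choose (m + s) s)
        = (∑ s ∈ Finset.range (d + 2),
            (-1 : ℤ) ^ s * (Nat.choose (m + d + 1) (m + s)) * (Nat.choose (m + s) s))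
          + ∑ s ∈ Finset.range (d + 2),
            (-1 : ℤ) ^ s * (Nat.choose (m + d + 1) (m + 1 + s)) * (Nat.choose (m + s) s) := by
      rw [← Finset.sum_add_distrib]
      refine Finset.sum_congr rfl fun s _ => ?_
      rw [pascal s]; ring
    rw [split]
    have h2 : ∑ s ∈ Finset.range (d + 2),
        (-1 : ℤ) ^ s * (Nat.choose (m + d + 1) (m + 1 + s)) * (Nat.choose (m + s) s) = 1 := by
      rw [Finset.sum_range_succ]
      have : Nat.choose (m + d + 1) (m + 1 + (d + 1)) = 0 :=
        Nat.choose_eq_zero_of_lt (by omega)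
      rw [this]
      simpa using ih
    have h1 : ∑ s ∈ Finset.range (d + 2),
        (-1 : ℤ) ^ s * (Nat.choose (m + d + 1) (m + s)) * (Nat.choose (m + s) s) = 0 := by
      have key : ∀ s ∈ Finset.range (d + 2),
          (-1 : ℤ) ^ s * (Nat.choose (m + d + 1) (m + s)) * (Nat.choose (m + s) s)
          = (Nat.choose (m + d + 1) m : ℤ) * ((-1) ^ s * Nat.choose (d + 1) s) := by
        intro s hs
        simp only [Finset.mem_range] at hs
        have hmul := Nat.choose_mul (n := m + d + 1) (k := m + s) (s := m)
          (Nat.le_add_right m s)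
        have e1 : m + d + 1 - m = d + 1 := by omega
        have e2 : m + s - m = s := by omega
        rw [e1, e2] at hmul
        have hsym : (m + s).choose s = (m + s).choose m := by
          rw [← Nat.choose_symm (Nat.le_add_left s m), Nat.add_sub_cancel]
        rw [hsym]
        have hZ : ((m + d + 1).choose (m + s) * (m + s).choose m : ℤ)
            = (m + d + 1).choose m * (d + 1).choose s := by exact_mod_cast hmul
        linear_combination ((-1 : ℤ) ^ s) * hZ
      rw [Finset.sum_congr rfl key, ← Finset.mul_sum,
        Int.alternating_sum_range_choose_of_ne (by omega), mul_zero]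
    rw [h1, h2]; ring

theorem binomial_alternating_sum_eq_one (i n k : ℕ) (hin : i ≤ n) (hnk : n ≤ k) :
    ∑ s ∈ Finset.range (k - n + 1),
      (-1 : ℤ) ^ s * (Nat.choose (k - i + 1) (n - i + 1 + s)) *
        (Nat.choose (n - i + s) s) = 1 := by
  have h : k - i = (n - i) + (k - n) := by omega
  rw [h]
  exact aux_binom (k - n) (n - i)
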